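/- Let M = (ℤ/2ⁿℤ)⁴ with a nondegenerate alternating pairing and let P ∈ M be an element of order 2ⁿ. Then the intersection of all maximal isotropic subgroups of M containing P is the cyclic subgroup ⟨P⟩ generated by P. -/

import Mathlib

lemma aux_even_of_not_isUnit {n : ℕ} {x : ZMod (2^n)} (h : ¬ IsUnit x) :
    ∃ y, x = 2 * y := by
  haveI : NeZero (2^n) := ⟨pow_ne_zero n two_ne_zero⟩
  have hx : ((x.val : ℕ) : ZMod (2^n)) = x := by simp
  rcases Nat.even_or_odd x.val with he | ho
  · obtain ⟨k, hk⟩ := he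
    exact ⟨(k : ZMod (2^n)), by rw [← hx, hk]; push_cast; ring⟩
  · exfalso
    apply h
    rw [← hx]
    rw [ZMod.isUnit_iff_coprime]
    exact (ho.coprime_two_right).pow_right n

lemma aux_pow_ne (n : ℕ) (hn : 1 ≤ n) : ((2:ZMod (2^n))^(n-1)) ≠ 0 := by
  haveI : NeZero (2^n) := ⟨pow_ne_zero n two_ne_zero⟩
  have : ((2:ZMod (2^n))^(n-1)) = ((2^(n-1) : ℕ) : ZMod (2^n)) := by push_cast; ring
  rw [this, Ne, ZMod.natCast_eq_zero_iff]
  rw [Nat.pow_dvd_pow_iff_le_right one_lt_two]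
  omega

lemma aux_pow_self (n : ℕ) : ((2:ZMod (2^n))^n) = 0 := by
  have : ((2:ZMod (2^n))^n) = ((2^n : ℕ) : ZMod (2^n)) := by push_cast; ring
  rw [this, ZMod.natCast_self]

lemma aux_local (n : ℕ) (hn : 1 ≤ n) : IsLocalRing (ZMod (2^n)) := by
  haveI : Fact (1 < 2^n) := ⟨Nat.one_lt_two_pow (by omega)⟩
  apply IsLocalRing.of_isUnit_or_isUnit_one_sub_self
  intro a
  by_cases ha : IsUnit a
  · exact Or.inl ha
  · right
    by_contra hb
    obtain ⟨y, hy⟩ := aux_even_of_not_isUnit ha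
    obtain ⟨z, hz⟩ := aux_even_of_not_isUnit hb
    apply aux_pow_ne n hn
    have h1 : (1 : ZMod (2^n)) = 2 * (y + z) := by
      have := hz
      rw [hy] at this
      linear_combination this
    have h2 : (2:ZMod (2^n))^(n-1) * 2 = (2:ZMod (2^n))^n := by
      rw [← pow_succ]; congr 1; omega
    calc (2:ZMod (2^n))^(n-1) = (2:ZMod (2^n))^(n-1) * 1 := by ring
    _ = ((2:ZMod (2^n))^(n-1) * 2) * (y+z) := by rw [h1]; ring
    _ = 0 := by rw [h2, aux_pow_self]; ring

set_option maxHeartbeats 2000000 in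
set_option synthInstance.maxHeartbeats 400000 in
/-- In `M = (ℤ/2ⁿℤ)⁴` with a nondegenerate alternating pairing, for any element
`P` of order `2ⁿ`, the intersection of all maximal isotropic subgroups of `M`
containing `P` is the cyclic subgroup generated by `P`. -/
theorem stmt_15 (n : ℕ) (hn : 1 ≤ n)
    (B : (Fin 4 → ZMod (2 ^ n)) →ₗ[ZMod (2 ^ n)] (Fin 4 → ZMod (2 ^ n))
      →ₗ[ZMod (2 ^ n)] ZMod (2 ^ n))
    (halt : ∀ x, B x x = 0)
    (hnd : Function.Bijective fun x => B.flip x)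
    (P : Fin 4 → ZMod (2 ^ n)) (hP : addOrderOf P = 2 ^ n) :
    sInf {N : Submodule (ZMod (2 ^ n)) (Fin 4 → ZMod (2 ^ n)) |
        (∀ x ∈ N, ∀ y ∈ N, B x y = 0) ∧ (∀ x, (∀ y ∈ N, B x y = 0) → x ∈ N) ∧ P ∈ N}
      = Submodule.span (ZMod (2 ^ n)) {P} := by
  classical
  have hskew : ∀ x y, B x y = - B y x := by
    intro x y
    have h := halt (x + y)
    simp only [map_add, LinearMap.add_apply, halt] at h
    linear_combination h
  have hinj : ∀ z : (Fin 4 → ZMod (2 ^ n)), (∀ y, B y z = 0) → z = 0 := by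
    intro z hz
    have : B.flip z = B.flip 0 := by
      ext y
      simp [LinearMap.flip_apply, hz]
    exact hnd.injective this
  have hinj' : ∀ z : (Fin 4 → ZMod (2 ^ n)), (∀ y, B z y = 0) → z = 0 := by
    intro z hz
    exact hinj z fun y => by rw [hskew, hz, neg_zero]
  have hc0 : ((2:ZMod (2^n))^(n-1)) ≠ 0 := aux_pow_ne n hn
  have hcast : ∀ z : (Fin 4 → ZMod (2 ^ n)),
      (2:ZMod (2^n))^(n-1) • z = (2^(n-1) : ℕ) • z := by
    intro z
    rw [← Nat.cast_smul_eq_nsmul (ZMod (2^n))]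
    push_cast
    ring_nf
  have hordP : (2:ZMod (2^n))^(n-1) • P ≠ 0 := by
    intro h0
    rw [hcast] at h0
    have hdvd := addOrderOf_dvd_of_nsmul_eq_zero h0
    rw [hP, Nat.pow_dvd_pow_iff_le_right one_lt_two] at hdvd
    omega
  have hkill : ∀ c : ZMod (2^n), (¬ IsUnit c) → (2:ZMod (2^n))^(n-1) * c = 0 := by
    intro c hc
    obtain ⟨d, hd⟩ := aux_even_of_not_isUnit hc
    have h2 : (2:ZMod (2^n))^(n-1) * 2 = (2:ZMod (2^n))^n := by
      rw [← pow_succ]; congr 1; omega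
    calc (2:ZMod (2^n))^(n-1) * c = ((2:ZMod (2^n))^(n-1) * 2) * d := by rw [hd]; ring
    _ = 0 := by rw [h2, aux_pow_self]; ring
  have hex_unit : ∀ z : Fin 4 → ZMod (2 ^ n),
      (2:ZMod (2^n))^(n-1) • z ≠ 0 → ∃ y, IsUnit (B z y) := by
    intro z hz
    by_contra hcon
    push_neg at hcon
    apply hz
    apply hinj'
    intro y
    rw [map_smul, LinearMap.smul_apply, smul_eq_mul]
    exact hkill _ (hcon y)
  -- find f with B P f = 1
  obtain ⟨y0, hy0⟩ := hex_unit P hordP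
  obtain ⟨c0, hc0y, -⟩ := isUnit_iff_exists.mp hy0
  set f : Fin 4 → ZMod (2 ^ n) := c0 • y0 with hf
  have hPf : B P f = 1 := by
    rw [hf, map_smul, smul_eq_mul, mul_comm]
    exact hc0y
  have hfP : B f P = -1 := by rw [hskew, hPf]
  set W : Submodule (ZMod (2 ^ n)) (Fin 4 → ZMod (2 ^ n)) :=
    LinearMap.ker (B P) ⊓ LinearMap.ker (B f) with hWdef
  have hmemW : ∀ x, x ∈ W ↔ (B P x = 0 ∧ B f x = 0) := by
    intro x
    simp [hWdef, LinearMap.mem_ker]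
  set p : (Fin 4 → ZMod (2 ^ n)) →ₗ[ZMod (2 ^ n)] (Fin 4 → ZMod (2 ^ n)) :=
    LinearMap.id - ((B.flip f).smulRight P) + ((B.flip P).smulRight f) with hpdef
  have hp_apply : ∀ x, p x = x - B x f • P + B x P • f := by
    intro x
    simp [hpdef, LinearMap.flip_apply]
  have hpW : ∀ x, p x ∈ W := by
    intro x
    rw [hmemW]
    constructor
    · rw [hp_apply]
      simp only [map_add, map_sub, map_smul, smul_eq_mul, halt, hPf]
      rw [hskew x P]
      ring
    · rw [hp_apply]
      simp only [map_add, map_sub, map_smul, smul_eq_mul, halt, hfP]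
      rw [hskew x f]
      ring
  have hpfix : ∀ x ∈ W, p x = x := by
    intro x hx
    rw [hmemW] at hx
    rw [hp_apply, hskew x f, hx.2, hskew x P, hx.1]
    simp
  have hpP : p P = 0 := by
    rw [hp_apply, hPf, halt]
    simp
  have hpf : p f = 0 := by
    rw [hp_apply, halt, hfP]
    simp [neg_smul]
  have hdecomp : ∀ x, x = B x f • P + (- B x P) • f + p x := by
    intro x
    rw [hp_apply, neg_smul]
    abel
  haveI : NeZero (2^n) := ⟨pow_ne_zero n two_ne_zero⟩
  haveI : IsLocalRing (ZMod (2^n)) := aux_local n hn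
  haveI hWfin : Module.Finite (ZMod (2^n)) ↥W :=
    Module.finite_iff_finite.mpr inferInstance
  haveI hWproj : Module.Projective (ZMod (2^n)) ↥W := by
    apply Module.Projective.of_split (M := Fin 4 → ZMod (2^n)) W.subtype
      (LinearMap.codRestrict W p hpW)
    apply LinearMap.ext
    rintro ⟨x, hx⟩
    apply Subtype.ext
    simpa using hpfix x hx
  haveI hWfp : Module.FinitePresentation (ZMod (2^n)) ↥W :=
    Module.finitePresentation_of_projective _ _
  haveI hWfree : Module.Free (ZMod (2^n)) ↥W :=
    Module.free_of_flat_of_isLocalRing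
  set ι := Module.Free.ChooseBasisIndex (ZMod (2^n)) ↥W with hι
  set b : Module.Basis ι (ZMod (2^n)) ↥W := Module.Free.chooseBasis _ _ with hb
  -- the equivalence M ≃ R × R × W
  set E : (Fin 4 → ZMod (2^n)) ≃ (ZMod (2^n) × ZMod (2^n) × ↥W) :=
    { toFun := fun x => (B x f, - B x P, ⟨p x, hpW x⟩)
      invFun := fun t => t.1 • P + t.2.1 • f + (t.2.2 : Fin 4 → ZMod (2^n))
      left_inv := fun x => (hdecomp x).symm
      right_inv := by
        rintro ⟨a, c, ⟨w, hw⟩⟩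
        rw [hmemW] at hw
        have hwf : B w f = 0 := by rw [hskew, hw.2, neg_zero]
        have hwP : B w P = 0 := by rw [hskew, hw.1, neg_zero]
        refine Prod.ext ?_ (Prod.ext ?_ (Subtype.ext ?_))
        · simp only [map_add, map_smul, LinearMap.add_apply, LinearMap.smul_apply,
            smul_eq_mul, hPf, halt, hwf]
          ring
        · simp only [map_add, map_smul, LinearMap.add_apply, LinearMap.smul_apply,
            smul_eq_mul, halt, hfP, hwP]
          ring
        · simp only [map_add, map_smul, hpP, hpf, hpfix w hw]
          simp } with hE
  have hcardM : Nat.card (Fin 4 → ZMod (2^n)) = (2^n)^4 := by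
    simp [Nat.card_pi, Nat.card_zmod]
  have hcardW : Nat.card ↥W = (2^n)^(Nat.card ι) := by
    rw [Nat.card_congr b.equivFun.toEquiv]
    simp [Nat.card_pi, Nat.card_zmod]
  have hcard2 : Nat.card ι = 2 := by
    have h := Nat.card_congr E
    rw [hcardM, Nat.card_prod, Nat.card_prod, Nat.card_zmod, hcardW] at h
    have h2 : (2:ℕ) ≤ 2^n := by
      calc (2:ℕ) = 2^1 := (pow_one 2).symm
      _ ≤ 2^n := Nat.pow_le_pow_right (by norm_num) hn
    have h' : (2^n)^4 = (2^n)^(2 + Nat.card ι) := by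
      rw [h]; ring
    have := Nat.pow_right_injective h2 h'
    omega
  haveI : Fintype ι := Fintype.ofFinite ι
  have hcard2' : Fintype.card ι = 2 := by
    rw [← Nat.card_eq_fintype_card, hcard2]
  set b2 : Module.Basis (Fin 2) (ZMod (2^n)) ↥W := b.reindex (Fintype.equivFinOfCardEq hcard2') with hb2
  set w1 : Fin 4 → ZMod (2^n) := ((b2 0 : ↥W) : Fin 4 → ZMod (2^n)) with hw1
  set w2 : Fin 4 → ZMod (2^n) := ((b2 1 : ↥W) : Fin 4 → ZMod (2^n)) with hw2
  have hw1W : w1 ∈ W := (b2 0).2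
  have hw2W : w2 ∈ W := (b2 1).2
  have hWrepr : ∀ w ∈ W, ∃ α β : ZMod (2^n), w = α • w1 + β • w2 := by
    intro w hw
    refine ⟨b2.repr ⟨w, hw⟩ 0, b2.repr ⟨w, hw⟩ 1, ?_⟩
    have := b2.sum_repr ⟨w, hw⟩
    rw [Fin.sum_univ_two] at this
    have h2 := congrArg (Subtype.val) this
    rw [Submodule.coe_add, Submodule.coe_smul, Submodule.coe_smul] at h2
    exact h2.symm
  -- B w1 w2 is a unit
  have hw1P : B w1 P = 0 := by rw [hskew, ((hmemW w1).mp hw1W).1, neg_zero]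
  have hw1f : B w1 f = 0 := by rw [hskew, ((hmemW w1).mp hw1W).2, neg_zero]
  have hw1ne : (2:ZMod (2^n))^(n-1) • w1 ≠ 0 := by
    intro h0
    apply hc0
    have hz : ((2:ZMod (2^n))^(n-1) • b2 0 : ↥W) = 0 := by
      apply Subtype.ext
      rw [Submodule.coe_smul]
      exact h0
    have := congrArg (fun v => (b2.repr v) 0) hz
    simpa using this
  have hu : IsUnit (B w1 w2) := by
    by_contra hcon
    apply hw1ne
    apply hinj'
    intro y
    obtain ⟨α, β, hαβ⟩ := hWrepr (p y) (hpW y)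
    have hy : B w1 y = β * B w1 w2 := by
      conv_lhs => rw [hdecomp y]
      rw [hαβ]
      simp only [map_add, map_smul, smul_eq_mul, hw1P, hw1f, halt]
      ring
    rw [map_smul, LinearMap.smul_apply, smul_eq_mul, hy]
    rw [show (2:ZMod (2^n))^(n-1) * (β * B w1 w2) = β * ((2:ZMod (2^n))^(n-1) * B w1 w2) by ring]
    rw [hkill _ hcon, mul_zero]
  obtain ⟨c1, hc1, -⟩ := isUnit_iff_exists.mp hu
  set Rv : Fin 4 → ZMod (2^n) := c1 • w2 with hRv
  have hRvW : Rv ∈ W := W.smul_mem _ hw2W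
  have hQR : B w1 Rv = 1 := by
    rw [hRv, map_smul, smul_eq_mul, mul_comm]
    exact hc1
  have hRQ : B Rv w1 = -1 := by rw [hskew, hQR]
  have hPw1 : B P w1 = 0 := ((hmemW w1).mp hw1W).1
  have hPRv : B P Rv = 0 := ((hmemW Rv).mp hRvW).1
  have hRvP : B Rv P = 0 := by rw [hskew, hPRv, neg_zero]
  have hRvf : B Rv f = 0 := by rw [hskew, ((hmemW Rv).mp hRvW).2, neg_zero]
  -- decomposition inside W
  have hWdec2 : ∀ w ∈ W, w = B w Rv • w1 + (-(B w w1)) • Rv := by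
    intro w hw
    obtain ⟨α, β, hαβ⟩ := hWrepr w hw
    have h1 : B w Rv = α := by
      rw [hαβ]
      simp only [map_add, map_smul, LinearMap.add_apply, LinearMap.smul_apply, smul_eq_mul,
        hQR, halt]
      have : B w2 Rv = 0 := by rw [hRv, map_smul, smul_eq_mul, halt, mul_zero]
      rw [this]
      ring
    have h2 : B w w1 = - (β * B w1 w2) := by
      rw [hαβ]
      simp only [map_add, map_smul, LinearMap.add_apply, LinearMap.smul_apply, smul_eq_mul, halt]
      rw [hskew w2 w1]
      ring
    rw [h1, h2, neg_neg, hRv, smul_smul]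
    rw [show β * B w1 w2 * c1 = β by rw [mul_assoc, hc1, mul_one]]
    exact hαβ
  have hfw1 : B f w1 = 0 := ((hmemW w1).mp hw1W).2
  have hfRv : B f Rv = 0 := ((hmemW Rv).mp hRvW).2
  set N1 : Submodule (ZMod (2^n)) (Fin 4 → ZMod (2^n)) :=
    Submodule.span (ZMod (2^n)) {P, w1} with hN1def
  set N2 : Submodule (ZMod (2^n)) (Fin 4 → ZMod (2^n)) :=
    Submodule.span (ZMod (2^n)) {P, Rv} with hN2def
  have hPmem1 : P ∈ N1 := Submodule.subset_span (by simp)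
  have hw1mem1 : w1 ∈ N1 := Submodule.subset_span (by simp)
  have hPmem2 : P ∈ N2 := Submodule.subset_span (by simp)
  have hRvmem2 : Rv ∈ N2 := Submodule.subset_span (by simp)
  have hN1S : (∀ x ∈ N1, ∀ y ∈ N1, B x y = 0) ∧
      (∀ x, (∀ y ∈ N1, B x y = 0) → x ∈ N1) ∧ P ∈ N1 := by
    refine ⟨?_, ?_, hPmem1⟩
    · intro x hx y hy
      rw [hN1def, Submodule.mem_span_pair] at hx hy
      obtain ⟨a, b, hx⟩ := hx
      obtain ⟨c, d, hy⟩ := hy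
      rw [← hx, ← hy]
      simp only [map_add, map_smul, LinearMap.add_apply, LinearMap.smul_apply, smul_eq_mul,
        halt, hPw1, hw1P]
      ring
    · intro x hx
      have hxP : B x P = 0 := hx P hPmem1
      have hxw1 : B x w1 = 0 := hx w1 hw1mem1
      have hpx1 : B (p x) w1 = 0 := by
        rw [hp_apply]
        simp only [map_add, map_sub, map_smul, LinearMap.add_apply, LinearMap.sub_apply,
          LinearMap.smul_apply, smul_eq_mul, hPw1, hfw1, hxw1]
        ring
      have hdx := hWdec2 (p x) (hpW x)
      rw [hpx1, neg_zero, zero_smul, add_zero] at hdx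
      have hx2 : x = B x f • P + p x := by
        conv_lhs => rw [hdecomp x]
        rw [hxP, neg_zero, zero_smul, add_zero]
      rw [hN1def, Submodule.mem_span_pair]
      exact ⟨B x f, B (p x) Rv, by rw [← hdx, ← hx2]⟩
  have hN2S : (∀ x ∈ N2, ∀ y ∈ N2, B x y = 0) ∧
      (∀ x, (∀ y ∈ N2, B x y = 0) → x ∈ N2) ∧ P ∈ N2 := by
    refine ⟨?_, ?_, hPmem2⟩
    · intro x hx y hy
      rw [hN2def, Submodule.mem_span_pair] at hx hy
      obtain ⟨a, b, hx⟩ := hx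
      obtain ⟨c, d, hy⟩ := hy
      rw [← hx, ← hy]
      simp only [map_add, map_smul, LinearMap.add_apply, LinearMap.smul_apply, smul_eq_mul,
        halt, hPRv, hRvP]
      ring
    · intro x hx
      have hxP : B x P = 0 := hx P hPmem2
      have hxRv : B x Rv = 0 := hx Rv hRvmem2
      have hpx1 : B (p x) Rv = 0 := by
        rw [hp_apply]
        simp only [map_add, map_sub, map_smul, LinearMap.add_apply, LinearMap.sub_apply,
          LinearMap.smul_apply, smul_eq_mul, hPRv, hfRv, hxRv]
        ring
      have hdx := hWdec2 (p x) (hpW x)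
      rw [hpx1, zero_smul, zero_add] at hdx
      have hx2 : x = B x f • P + p x := by
        conv_lhs => rw [hdecomp x]
        rw [hxP, neg_zero, zero_smul, add_zero]
      rw [hN2def, Submodule.mem_span_pair]
      exact ⟨B x f, -(B (p x) w1), by rw [← hdx, ← hx2]⟩
  apply le_antisymm
  · have h1 : sInf {N : Submodule (ZMod (2 ^ n)) (Fin 4 → ZMod (2 ^ n)) |
        (∀ x ∈ N, ∀ y ∈ N, B x y = 0) ∧ (∀ x, (∀ y ∈ N, B x y = 0) → x ∈ N) ∧ P ∈ N}
        ≤ N1 ⊓ N2 := le_inf (sInf_le hN1S) (sInf_le hN2S)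
    refine h1.trans ?_
    intro x hx
    rw [Submodule.mem_inf] at hx
    obtain ⟨hx1, hx2⟩ := hx
    rw [hN1def, Submodule.mem_span_pair] at hx1
    rw [hN2def, Submodule.mem_span_pair] at hx2
    obtain ⟨a, b, hab⟩ := hx1
    obtain ⟨c, d, hcd⟩ := hx2
    have hb : b = 0 := by
      have e1 : B x Rv = b := by
        rw [← hab]
        simp only [map_add, map_smul, LinearMap.add_apply, LinearMap.smul_apply, smul_eq_mul,
          hPRv, hQR]
        ring
      have e2 : B x Rv = 0 := by
        rw [← hcd]
        simp only [map_add, map_smul, LinearMap.add_apply, LinearMap.smul_apply, smul_eq_mul,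
          hPRv, halt]
        ring
      rw [e1] at e2
      exact e2
    rw [Submodule.mem_span_singleton]
    exact ⟨a, by rw [← hab, hb, zero_smul, add_zero]⟩
  · apply le_sInf
    rintro N ⟨-, -, hPN⟩
    rw [Submodule.span_le, Set.singleton_subset_iff]
    exact hPN
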